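/- Let $k$ be a field, $R = k[x,y]$, $j \geq 1$, and let $N$ be the $R$-module with generators $\beta_0, \dots, \beta_j$ and relations $x^m \beta_{m+i} = y^m \beta_i$ for $1 \leq m \leq j$, $0 \leq i \leq j-m$. Then $N$ is isomorphic to the ideal $I = (x^j, x^{j-1}y, \dots, y^j) \subseteq R$, via $\beta_i \mapsto x^{j-i} y^i$. -/

import Mathlib

open MvPolynomial

/-- The relation set `{x^m • β_{m+i} - y^m • β_i : 1 ≤ m ≤ j, 0 ≤ i ≤ j - m}` in `R^(j+1)`. -/
def relSet (k : Type*) [Field k] (j : ℕ) : Set (Fin (j + 1) → MvPolynomial (Fin 2) k) :=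
  {v | ∃ m, ∃ i, ∃ (_ : 1 ≤ m) (hm : m ≤ j) (hi : i ≤ j - m),
    v = ((X 0 : MvPolynomial (Fin 2) k) ^ m) •
          (Pi.single (⟨m + i, by omega⟩ : Fin (j + 1)) 1 : Fin (j + 1) → MvPolynomial (Fin 2) k)
        - ((X 1 : MvPolynomial (Fin 2) k) ^ m) •
          (Pi.single (⟨i, by omega⟩ : Fin (j + 1)) 1 : Fin (j + 1) → MvPolynomial (Fin 2) k)}

namespace Stmt13Aux

set_option maxHeartbeats 1000000

variable (k : Type*) [Field k] (j : ℕ)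

/-- The map sending `e_i` to `x^(j-i) y^i`. -/
noncomputable def psi : (Fin (j + 1) → MvPolynomial (Fin 2) k) →ₗ[MvPolynomial (Fin 2) k]
    MvPolynomial (Fin 2) k :=
  Fintype.linearCombination (MvPolynomial (Fin 2) k)
    (fun i : Fin (j + 1) => X 0 ^ (j - (i : ℕ)) * X 1 ^ (i : ℕ))

lemma psi_single (i : Fin (j + 1)) :
    psi k j (Pi.single i 1) = X 0 ^ (j - (i : ℕ)) * X 1 ^ (i : ℕ) := by
  simp [psi]

lemma span_le_ker : Submodule.span (MvPolynomial (Fin 2) k) (relSet k j) ≤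
    LinearMap.ker (psi k j) := by
  rw [Submodule.span_le]
  rintro v ⟨m, i, h1, hm, hi, rfl⟩
  simp only [SetLike.mem_coe, LinearMap.mem_ker, map_sub, map_smul, psi_single]
  rw [smul_eq_mul, smul_eq_mul, sub_eq_zero]
  have e1 : m + (j - (m + i)) = j - i := by omega
  calc X 0 ^ m * (X 0 ^ (j - ((⟨m + i, by omega⟩ : Fin (j+1)) : ℕ)) *
          X 1 ^ (((⟨m + i, by omega⟩ : Fin (j+1)) : ℕ)) : MvPolynomial (Fin 2) k)
      = X 0 ^ (m + (j - (m + i))) * X 1 ^ (m + i) := by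
        simp only [Fin.val_mk]; ring
    _ = X 1 ^ m * (X 0 ^ (j - ((⟨i, by omega⟩ : Fin (j+1)) : ℕ)) *
          X 1 ^ (((⟨i, by omega⟩ : Fin (j+1)) : ℕ))) := by
        simp only [Fin.val_mk, e1]; ring

/-- Coordinates `1..j` involve only the variable `y`. -/
def NoXAt (g : Fin (j + 1) → MvPolynomial (Fin 2) k) : Prop :=
  ∀ i : Fin (j + 1), 1 ≤ (i : ℕ) → ∀ d : Fin 2 →₀ ℕ, d 0 ≠ 0 → coeff d (g i) = 0

/-- The `i`-th standard basis vector. -/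
noncomputable def eV (i : Fin (j + 1)) : Fin (j + 1) → MvPolynomial (Fin 2) k :=
  Pi.single i 1

lemma smul_eV_apply (p : MvPolynomial (Fin 2) k) (i i' : Fin (j + 1)) :
    (p • eV k j i) i' = if i' = i then p else 0 := by
  rcases eq_or_ne i' i with rfl | hne
  · simp [eV]
  · simp [eV, Pi.single_eq_of_ne hne, hne]

lemma relMem (m i' : ℕ) (h1 : 1 ≤ m) (hm : m ≤ j) (hi : i' ≤ j - m) :
    (X 0 : MvPolynomial (Fin 2) k) ^ m • eV k j ⟨m + i', by omega⟩
      - (X 1 : MvPolynomial (Fin 2) k) ^ m • eV k j ⟨i', by omega⟩ ∈ relSet k j :=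
  ⟨m, i', h1, hm, hi, rfl⟩

lemma reduce_monomial (d : Fin 2 →₀ ℕ) (c : k) (i : Fin (j + 1)) (hi : 1 ≤ (i : ℕ)) :
    ∃ g, (monomial d c : MvPolynomial (Fin 2) k) • eV k j i - g ∈
        Submodule.span (MvPolynomial (Fin 2) k) (relSet k j) ∧ NoXAt k j g := by
  have hij : (i : ℕ) ≤ j := by omega
  by_cases ha : d 0 = 0
  · refine ⟨(monomial d c : MvPolynomial (Fin 2) k) • eV k j i,
      by simp [Submodule.zero_mem], ?_⟩
    intro i' _ e he
    rw [smul_eV_apply]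
    rcases eq_or_ne i' i with rfl | hne
    · rw [if_pos rfl, coeff_monomial, if_neg]
      intro h; subst h; exact he ha
    · rw [if_neg hne, coeff_zero]
  · have ha1 : 1 ≤ d 0 := Nat.one_le_iff_ne_zero.mpr ha
    set m := min (d 0) (i : ℕ) with hmdef
    have hm1 : 1 ≤ m := le_min ha1 hi
    have hmj : m ≤ j := le_trans (min_le_right _ _) hij
    have hmi : m ≤ (i : ℕ) := min_le_right _ _
    have hrel := relMem k j m ((i : ℕ) - m) hm1 hmj (by omega)
    have hfin : (⟨m + ((i:ℕ) - m), by omega⟩ : Fin (j + 1)) = i := by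
      apply Fin.ext; simp; omega
    rw [hfin] at hrel
    set q : MvPolynomial (Fin 2) k := monomial (d - Finsupp.single 0 m) c with hq
    have hsle : Finsupp.single (0 : Fin 2) m ≤ d := Finsupp.single_le_iff.mpr (min_le_left _ _)
    have hqX : q * X 0 ^ m = monomial d c := by
      rw [hq, X_pow_eq_monomial, monomial_mul, mul_one, tsub_add_cancel_of_le hsle]
    refine ⟨(X 1 ^ m * q) • eV k j ⟨(i:ℕ) - m, by omega⟩, ?_, ?_⟩
    · have key : (monomial d c : MvPolynomial (Fin 2) k) • eV k j i
          - (X 1 ^ m * q) • eV k j ⟨(i:ℕ) - m, by omega⟩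
          = q • ((X 0 : MvPolynomial (Fin 2) k) ^ m • eV k j i
            - (X 1 : MvPolynomial (Fin 2) k) ^ m • eV k j ⟨(i:ℕ) - m, by omega⟩) := by
        funext i''
        simp only [Pi.sub_apply, Pi.smul_apply, smul_eq_mul, eV, Pi.single_apply]
        split_ifs <;> simp [hqX, mul_sub] <;> ring_nf <;> simp [← hqX] <;> ring
      rw [key]
      exact Submodule.smul_mem _ q (Submodule.subset_span hrel)
    · intro i' h1 e he
      rw [smul_eV_apply]
      rcases eq_or_ne i' (⟨(i:ℕ) - m, by omega⟩ : Fin (j + 1)) with heq | hne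
      · rw [if_pos heq]
        have him : (i : ℕ) - m ≠ 0 := by
          have : (i' : ℕ) = (i : ℕ) - m := by rw [heq]
          omega
        have hma : m = d 0 := by omega
        rw [hq, X_pow_eq_monomial, monomial_mul, one_mul, coeff_monomial, if_neg]
        intro h
        apply he
        rw [← h]
        simp [Finsupp.single_apply, hma]
      · rw [if_neg hne, coeff_zero]

lemma reduce_poly (p : MvPolynomial (Fin 2) k) (i : Fin (j + 1)) (hi : 1 ≤ (i : ℕ)) :
    ∃ g, p • eV k j i - g ∈ Submodule.span (MvPolynomial (Fin 2) k) (relSet k j)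
      ∧ NoXAt k j g := by
  induction p using MvPolynomial.induction_on' with
  | monomial d c => exact reduce_monomial k j d c i hi
  | add p q hp hq =>
    obtain ⟨gp, hgp, hp2⟩ := hp
    obtain ⟨gq, hgq, hq2⟩ := hq
    refine ⟨gp + gq, ?_, ?_⟩
    · have : (p + q) • eV k j i - (gp + gq)
          = (p • eV k j i - gp) + (q • eV k j i - gq) := by
        rw [add_smul]; abel
      rw [this]
      exact Submodule.add_mem _ hgp hgq
    · intro i' h1 e he
      simp only [Pi.add_apply, coeff_add, hp2 i' h1 e he, hq2 i' h1 e he, add_zero]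

lemma reduce_all (f : Fin (j + 1) → MvPolynomial (Fin 2) k) :
    ∃ g, f - g ∈ Submodule.span (MvPolynomial (Fin 2) k) (relSet k j) ∧ NoXAt k j g := by
  have h : ∀ i : Fin (j + 1), ∃ g, (f i) • eV k j i - g ∈
      Submodule.span (MvPolynomial (Fin 2) k) (relSet k j) ∧ NoXAt k j g := by
    intro i
    rcases Nat.eq_zero_or_pos (i : ℕ) with h0 | h1
    · refine ⟨(f i) • eV k j i, by simp [Submodule.zero_mem], ?_⟩
      intro i' h1 e he
      have hne : i' ≠ i := by
        intro h; subst h; omega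
      have : ((f i) • eV k j i) i' = 0 := by
        simp [eV, Pi.single_eq_of_ne hne]
      rw [this, coeff_zero]
    · exact reduce_poly k j (f i) i h1
  choose g hg1 hg2 using h
  refine ⟨∑ i, g i, ?_, ?_⟩
  · have hf : f = ∑ i, (f i) • eV k j i := by
      funext i'
      rw [Finset.sum_apply]
      simp [eV, Pi.single_apply]
    have : f - ∑ i, g i = ∑ i, ((f i) • eV k j i - g i) := by
      rw [Finset.sum_sub_distrib, ← hf]
    rw [this]
    exact Submodule.sum_mem _ (fun i _ => hg1 i)
  · intro i' h1 e he
    rw [Finset.sum_apply, coeff_sum]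
    exact Finset.sum_eq_zero fun i _ => hg2 i i' h1 e he

lemma normal_inj (g : Fin (j + 1) → MvPolynomial (Fin 2) k) (hg : NoXAt k j g)
    (h0 : psi k j g = 0) : g = 0 := by
  have hzero : ∀ i : Fin (j + 1), 1 ≤ (i : ℕ) → g i = 0 := by
    intro i0 hi0
    have hi0j : (i0 : ℕ) ≤ j := by omega
    ext e
    rw [coeff_zero]
    by_cases he : e 0 = 0
    swap
    · exact hg i0 hi0 e he
    · set b := e (1 : Fin 2) with hb
      have heb : e = Finsupp.single 1 b := by
        ext a
        fin_cases a
        · simp [he, Finsupp.single_apply]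
        · simp [hb, Finsupp.single_apply]
      set D : Fin 2 →₀ ℕ :=
        Finsupp.single 0 (j - (i0 : ℕ)) + Finsupp.single 1 ((i0 : ℕ) + b) with hD
      have hDval0 : D 0 = j - (i0 : ℕ) := by simp [hD, Finsupp.single_apply]
      have hDval1 : D 1 = (i0 : ℕ) + b := by simp [hD, Finsupp.single_apply]
      have hDc : coeff D (psi k j g) = 0 := by rw [h0, coeff_zero]
      rw [psi, Fintype.linearCombination_apply, coeff_sum] at hDc
      have hterm : ∀ i : Fin (j + 1),
          coeff D (g i • ((X 0 : MvPolynomial (Fin 2) k) ^ (j - (i : ℕ)) * X 1 ^ (i : ℕ)))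
            = if i = i0 then coeff e (g i0) else 0 := by
        intro i
        have hij : (i : ℕ) ≤ j := by omega
        set s : Fin 2 →₀ ℕ :=
          Finsupp.single 0 (j - (i : ℕ)) + Finsupp.single 1 (i : ℕ) with hs
        have hs0 : s 0 = j - (i : ℕ) := by simp [hs, Finsupp.single_apply]
        have hs1 : s 1 = (i : ℕ) := by simp [hs, Finsupp.single_apply]
        have hmon : (X 0 : MvPolynomial (Fin 2) k) ^ (j - (i : ℕ)) * X 1 ^ (i : ℕ)
            = monomial s 1 := by
          rw [X_pow_eq_monomial, X_pow_eq_monomial, monomial_mul, mul_one]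
        rw [smul_eq_mul, hmon, coeff_mul_monomial']
        rcases eq_or_ne i i0 with rfl | hne
        · rw [if_pos, if_pos rfl, mul_one]
          · congr 1
            rw [heb]
            ext a
            fin_cases a
            · simp [Finsupp.tsub_apply, hDval0, hs0, Finsupp.single_apply]
            · simp [Finsupp.tsub_apply, hDval1, hs1, Finsupp.single_apply]
          · rw [Finsupp.le_def, Fin.forall_fin_two]
            constructor
            · simp only [hs0, hDval0]; omega
            · simp only [hs1, hDval1]; omega
        · rw [if_neg hne]
          by_cases hle : s ≤ D
          · rw [if_pos hle, mul_one]
            have h1 : j - (i : ℕ) ≤ j - (i0 : ℕ) := by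
              have := hle 0; rwa [hs0, hDval0] at this
            have hgt : (i0 : ℕ) < (i : ℕ) := by
              rcases lt_or_gt_of_ne (fun h : (i : ℕ) = (i0 : ℕ) => hne (Fin.ext h)) with h | h
              · omega
              · exact h
            have hd0 : (D - s) 0 ≠ 0 := by
              rw [Finsupp.tsub_apply, hs0, hDval0]; omega
            exact hg i (by omega) _ hd0
          · rw [if_neg hle]
      rw [Finset.sum_congr rfl (fun i _ => hterm i)] at hDc
      rw [Finset.sum_ite_eq' Finset.univ i0 (fun _ => coeff e (g i0))] at hDc
      simpa using hDc
  have hX : ((X 0 : MvPolynomial (Fin 2) k) ^ (j - ((0 : Fin (j+1)) : ℕ))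
      * X 1 ^ ((0 : Fin (j+1)) : ℕ)) ≠ 0 := by
    apply mul_ne_zero <;> exact pow_ne_zero _ (X_ne_zero _)
  have h00 : g 0 = 0 := by
    have heq : psi k j g = g 0 • ((X 0 : MvPolynomial (Fin 2) k) ^ (j - ((0 : Fin (j+1)) : ℕ))
        * X 1 ^ ((0 : Fin (j+1)) : ℕ)) := by
      rw [psi, Fintype.linearCombination_apply]
      rw [Finset.sum_eq_single (0 : Fin (j + 1))]
      · intro i _ hne
        have hiv : (i : ℕ) ≠ 0 := fun h => hne (Fin.ext (by simpa using h))
        rw [hzero i (by omega), zero_smul]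
      · intro h; exact absurd (Finset.mem_univ _) h
    rw [h0] at heq
    rw [smul_eq_mul] at heq
    exact (mul_eq_zero.mp heq.symm).resolve_right hX
  funext i
  rcases Nat.eq_zero_or_pos (i : ℕ) with h | h
  · have : i = 0 := by
      apply Fin.ext; simpa using h
    rw [this]
    simpa using h00
  · simpa using hzero i h

lemma ker_le_span : LinearMap.ker (psi k j) ≤
    Submodule.span (MvPolynomial (Fin 2) k) (relSet k j) := by
  intro f hf
  obtain ⟨g, hfg, hnox⟩ := reduce_all k j f
  have hpsig : psi k j g = 0 := by
    have h1 : psi k j (f - g) = 0 := span_le_ker k j hfg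
    rw [map_sub] at h1
    rw [LinearMap.mem_ker] at hf
    rw [hf] at h1
    simpa using h1
  have := normal_inj k j g hnox hpsig
  subst this
  simpa using hfg

lemma range_eq : LinearMap.range (psi k j) =
    (Ideal.span {f : MvPolynomial (Fin 2) k | ∃ i ≤ j, f = X 0 ^ (j - i) * X 1 ^ i}
      : Ideal (MvPolynomial (Fin 2) k)) := by
  rw [psi, Fintype.range_linearCombination]
  congr 1
  ext f
  constructor
  · rintro ⟨i, rfl⟩
    exact ⟨i, Nat.lt_succ_iff.mp i.isLt, rfl⟩
  · rintro ⟨i, hij, rfl⟩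
    exact ⟨⟨i, by omega⟩, rfl⟩

end Stmt13Aux

theorem stmt13 (k : Type*) [Field k] (j : ℕ) (hj : 1 ≤ j) :
    ∃ φ : ((Fin (j + 1) → MvPolynomial (Fin 2) k) ⧸
            Submodule.span (MvPolynomial (Fin 2) k) (relSet k j))
          ≃ₗ[MvPolynomial (Fin 2) k]
          (Ideal.span {f : MvPolynomial (Fin 2) k | ∃ i ≤ j, f = X 0 ^ (j - i) * X 1 ^ i}
            : Ideal (MvPolynomial (Fin 2) k)),
      ∀ i : Fin (j + 1),
        (φ (Submodule.Quotient.mk (Pi.single i 1)) : MvPolynomial (Fin 2) k)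
          = X 0 ^ (j - (i : ℕ)) * X 1 ^ (i : ℕ) := by
  have hker : Submodule.span (MvPolynomial (Fin 2) k) (relSet k j)
      = LinearMap.ker (Stmt13Aux.psi k j) :=
    le_antisymm (Stmt13Aux.span_le_ker k j) (Stmt13Aux.ker_le_span k j)
  refine ⟨(Submodule.quotEquivOfEq _ _ hker).trans
    ((Stmt13Aux.psi k j).quotKerEquivRange.trans
      (LinearEquiv.ofEq _ _ (Stmt13Aux.range_eq k j))), ?_⟩
  intro i
  simp only [LinearEquiv.trans_apply, Submodule.quotEquivOfEq_mk]
  rw [show ((LinearEquiv.ofEq _ _ (Stmt13Aux.range_eq k j))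
      ((Stmt13Aux.psi k j).quotKerEquivRange (Submodule.Quotient.mk (Pi.single i 1)))
      : MvPolynomial (Fin 2) k)
    = ((Stmt13Aux.psi k j).quotKerEquivRange (Submodule.Quotient.mk (Pi.single i 1))
      : MvPolynomial (Fin 2) k) from rfl]
  rw [LinearMap.quotKerEquivRange_apply_mk]
  exact Stmt13Aux.psi_single k j i
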